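/- For a uniformly random permutation $\pi$ of $\{1,\dots,n\}$ ($n \ge 2$), vectors $g_1,\dots,g_n \in \mathbb{R}^d$ with $\sum_{i=1}^n g_i = 0$, and variance $\sigma^2 = \frac{1}{n}\sum_{i=1}^n \|g_i\|^2$, it holds for each $0 \le k \le n$ that $\mathbb{E}\big[\big\|\sum_{i=k}^{n-1} g_{\pi_i}\big\|^2\big] = \frac{k(n-k)}{n-1}\sigma^2$, and consequently $\sum_{k=0}^{n-1}\mathbb{E}\big[\big\|\sum_{i=k}^{n-1} g_{\pi_i}\big\|^2\big] = \frac{n(n+1)}{6}\sigma^2 \le \frac{n^2\sigma^2}{4}$. -/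

import Mathlib

lemma sum_perm_apply_zero {m : ℕ} (F : Fin (m+1) → ℝ) :
    ∑ π : Equiv.Perm (Fin (m+1)), F (π 0) = (Nat.factorial m : ℝ) * ∑ a, F a := by
  rw [← Equiv.sum_comp Equiv.Perm.decomposeFin.symm (fun π => F (π 0))]
  rw [Fintype.sum_prod_type]
  simp [Equiv.Perm.decomposeFin_symm_apply_zero, Finset.sum_const, Fintype.card_perm,
    Fintype.card_fin, mul_comm, Finset.mul_sum]

lemma sum_id_real (n : ℕ) : 2 * ∑ k ∈ Finset.range n, (k:ℝ) = n * (n - 1) := by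
  induction n with
  | zero => simp
  | succ n ih =>
    rw [Finset.sum_range_succ]
    push_cast
    push_cast at ih
    linarith

lemma sum_sq_real (n : ℕ) : 6 * ∑ k ∈ Finset.range n, (k:ℝ)^2 = n * (n - 1) * (2*n - 1) := by
  induction n with
  | zero => simp
  | succ n ih =>
    rw [Finset.sum_range_succ]
    push_cast
    push_cast at ih
    nlinarith [ih]

/-- For vectors summing to zero and a uniformly random permutation,
`E‖∑_{i=k}^{n-1} g_{π_i}‖² = k(n-k)/(n-1) σ²`, and the sum over `k`
equals `n(n+1)/6 σ² ≤ n²σ²/4`. -/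
theorem tail_sum_variance_without_replacement
    (d n : ℕ) (hn : 2 ≤ n) (g : Fin n → EuclideanSpace ℝ (Fin d))
    (hg : ∑ i, g i = 0)
    (σ2 : ℝ) (hσ : σ2 = (n : ℝ)⁻¹ * ∑ i, ‖g i‖ ^ 2)
    (E : ℕ → ℝ)
    (hE : ∀ k, E k = (Fintype.card (Equiv.Perm (Fin n)) : ℝ)⁻¹ *
      ∑ π : Equiv.Perm (Fin n),
        ‖∑ i ∈ Finset.univ.filter (fun i : Fin n => k ≤ (i : ℕ)), g (π i)‖ ^ 2) :
    (∀ k ≤ n, E k = ((k : ℝ) * ((n : ℝ) - k)) / ((n : ℝ) - 1) * σ2) ∧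
    (∑ k ∈ Finset.range n, E k = (n : ℝ) * ((n : ℝ) + 1) / 6 * σ2) ∧
    (n : ℝ) * ((n : ℝ) + 1) / 6 * σ2 ≤ (n : ℝ) ^ 2 * σ2 / 4 := by
  have hσ2nonneg : 0 ≤ σ2 := by
    rw [hσ]
    exact mul_nonneg (inv_nonneg.mpr (Nat.cast_nonneg n))
      (Finset.sum_nonneg fun i _ => by positivity)
  obtain ⟨m, rfl⟩ : ∃ m, n = m + 1 := ⟨n - 1, by omega⟩
  have hm : 1 ≤ m := by omega
  have hmR : (1:ℝ) ≤ (m:ℝ) := by exact_mod_cast hm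
  set S : ℝ := ∑ i, ‖g i‖ ^ 2 with hS
  set c : Fin (m+1) → Fin (m+1) → ℝ :=
    fun i j => ∑ π : Equiv.Perm (Fin (m+1)), (inner ℝ (g (π i)) (g (π j)) : ℝ) with hc
  -- relabeling symmetry
  have relabel : ∀ (σ : Equiv.Perm (Fin (m+1))) (i j : Fin (m+1)),
      c i j = c (σ i) (σ j) := by
    intro σ i j
    exact Fintype.sum_equiv (Equiv.mulRight σ⁻¹) _ _ (fun π => by
      simp [Equiv.Perm.mul_apply])
  -- diagonal value
  have hc00 : c 0 0 = (Nat.factorial m : ℝ) * S := by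
    have h1 : c 0 0 = ∑ π : Equiv.Perm (Fin (m+1)), ‖g (π 0)‖ ^ 2 := by
      refine Finset.sum_congr rfl fun π _ => ?_
      exact real_inner_self_eq_norm_sq _
    rw [h1, sum_perm_apply_zero (fun a => ‖g a‖ ^ 2)]
  have hcii : ∀ i : Fin (m+1), c i i = (Nat.factorial m : ℝ) * S := by
    intro i
    have h := relabel (Equiv.swap 0 i) 0 0
    rw [Equiv.swap_apply_left] at h
    rw [← h, hc00]
  -- off-diagonal constancy
  have hi1 : (1 : ℕ) < m + 1 := by omega
  set i1 : Fin (m+1) := ⟨1, hi1⟩ with hi1def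
  have hi10 : i1 ≠ 0 := by simp [hi1def, Fin.ext_iff]
  set B : ℝ := c 0 i1 with hB
  have hcij : ∀ i j : Fin (m+1), i ≠ j → c i j = B := by
    intro i j hij
    set σ1 := Equiv.swap (0 : Fin (m+1)) i with hσ1
    have hσ1i1 : σ1 i1 ≠ i := by
      intro h
      have h2 : σ1 i1 = σ1 0 := by rw [h, hσ1, Equiv.swap_apply_left]
      exact hi10 (σ1.injective h2)
    set σ := (Equiv.swap (σ1 i1) j) * σ1 with hσdef
    have h0 : σ 0 = i := by
      rw [hσdef, Equiv.Perm.mul_apply, hσ1, Equiv.swap_apply_left]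
      exact Equiv.swap_apply_of_ne_of_ne hσ1i1.symm hij
    have h1 : σ i1 = j := by
      rw [hσdef, Equiv.Perm.mul_apply, Equiv.swap_apply_left]
    have h := relabel σ 0 i1
    rw [h0, h1] at h
    exact h.symm
  -- row sums vanish
  have hrow : ∑ j, c 0 j = 0 := by
    have h1 : ∑ j, c 0 j
        = ∑ π : Equiv.Perm (Fin (m+1)), (inner ℝ (g (π 0)) (∑ j, g (π j)) : ℝ) := by
      rw [Finset.sum_comm]
      exact Finset.sum_congr rfl fun π _ => (inner_sum _ _ _).symm
    have hz : ∀ π : Equiv.Perm (Fin (m+1)), ∑ j, g (π j) = 0 := by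
      intro π
      rw [Equiv.sum_comp π g]
      exact hg
    rw [h1]
    simp [hz]
  -- solve for B
  have hmB : (m : ℝ) * B = -((Nat.factorial m : ℝ) * S) := by
    have hsplit : ∑ j, c 0 j = c 0 0 + ∑ j ∈ Finset.univ.erase 0, c 0 j := by
      rw [← Finset.add_sum_erase _ _ (Finset.mem_univ (0 : Fin (m+1)))]
    have herase : ∑ j ∈ Finset.univ.erase 0, c 0 j = (m : ℝ) * B := by
      have hconst : ∀ j ∈ Finset.univ.erase (0 : Fin (m+1)), c 0 j = B := by
        intro j hj
        exact hcij 0 j (Ne.symm (Finset.ne_of_mem_erase hj))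
      rw [Finset.sum_congr rfl hconst, Finset.sum_const, nsmul_eq_mul]
      congr 1
      rw [Finset.card_erase_of_mem (Finset.mem_univ _), Finset.card_univ, Fintype.card_fin]
      simp
    rw [hsplit, hc00, herase] at hrow
    linarith
  have hfac : (Nat.factorial m : ℝ) ≠ 0 := by positivity
  have hm0 : (m : ℝ) ≠ 0 := by positivity
  have hBval : B = -((Nat.factorial m : ℝ) * S) / m := by
    field_simp
    linarith
  -- expectation formula for each k ≤ m+1
  have hcard : (Fintype.card (Equiv.Perm (Fin (m+1))) : ℝ)
      = ((m:ℝ) + 1) * (Nat.factorial m : ℝ) := by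
    rw [Fintype.card_perm, Fintype.card_fin, Nat.factorial_succ]
    push_cast
    ring
  have hσS : σ2 = ((m:ℝ)+1)⁻¹ * S := by
    rw [hσ]
    norm_num
  have key : ∀ k ≤ m + 1, E k = ((k : ℝ) * (((m+1) : ℝ) - k)) / (((m+1) : ℝ) - 1) * σ2 := by
    intro k hk
    set T : Finset (Fin (m+1)) := Finset.univ.filter (fun i : Fin (m+1) => k ≤ (i : ℕ)) with hT
    have hTcard : T.card = m + 1 - k := by
      rw [← Nat.card_Ico k (m+1)]
      apply Finset.card_bij (fun (i : Fin (m+1)) _ => (i : ℕ))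
      · intro i hi
        rw [hT, Finset.mem_filter] at hi
        exact Finset.mem_Ico.mpr ⟨hi.2, i.isLt⟩
      · intro a _ b _ hab
        exact Fin.ext hab
      · intro a ha
        rw [Finset.mem_Ico] at ha
        exact ⟨⟨a, ha.2⟩, by rw [hT]; simp [ha.1], rfl⟩
    -- expand norm squared
    have hexpand : ∑ π : Equiv.Perm (Fin (m+1)), ‖∑ i ∈ T, g (π i)‖ ^ 2
        = ∑ i ∈ T, ∑ j ∈ T, c i j := by
      have h1 : ∀ π : Equiv.Perm (Fin (m+1)),
          ‖∑ i ∈ T, g (π i)‖ ^ 2 = ∑ i ∈ T, ∑ j ∈ T, (inner ℝ (g (π i)) (g (π j)) : ℝ) := by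
        intro π
        rw [← real_inner_self_eq_norm_sq, sum_inner]
        exact Finset.sum_congr rfl fun i _ => inner_sum _ _ _
      rw [Finset.sum_congr rfl fun π _ => h1 π]
      rw [Finset.sum_comm]
      refine Finset.sum_congr rfl fun i _ => ?_
      rw [Finset.sum_comm]
    have hpoint : ∀ i j : Fin (m+1), c i j =
        if i = j then (Nat.factorial m : ℝ) * S else B := by
      intro i j
      split
      · next h => rw [h]; exact hcii j
      · next h => exact hcij i j h
    have hdouble : ∑ i ∈ T, ∑ j ∈ T, c i j =
        (T.card : ℝ) * ((Nat.factorial m : ℝ) * S)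
          + ((T.card : ℝ)^2 - T.card) * B := by
      have hinner : ∀ i ∈ T, ∑ j ∈ T, c i j =
          (T.card : ℝ) * B + ((Nat.factorial m : ℝ) * S - B) := by
        intro i hi
        have h2 : ∀ j ∈ T, c i j
            = B + (if i = j then (Nat.factorial m : ℝ) * S - B else 0) := by
          intro j _
          rw [hpoint i j]
          split <;> ring
        rw [Finset.sum_congr rfl h2, Finset.sum_add_distrib, Finset.sum_const,
          nsmul_eq_mul, Finset.sum_ite_eq, if_pos hi]
      rw [Finset.sum_congr rfl hinner, Finset.sum_const, nsmul_eq_mul]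
      ring
    have hq : ((m + 1 - k : ℕ) : ℝ) = ((m:ℝ) + 1) - k := by
      rw [Nat.cast_sub hk]
      push_cast
      ring
    rw [hE k, ← hT, hexpand, hdouble, hTcard, hcard, hBval, hσS, hq]
    have hm1 : (m:ℝ) + 1 ≠ 0 := by positivity
    have hm2 : (m:ℝ) + 1 - 1 ≠ 0 := by simpa using hm0
    field_simp
    ring
  refine ⟨fun k hk => by rw [key k hk]; push_cast; ring, ?_, ?_⟩
  · have hsum : ∑ k ∈ Finset.range (m+1), E k =
        ∑ k ∈ Finset.range (m+1), ((k : ℝ) * (((m:ℝ)+1) - k)) / (m:ℝ) * σ2 := by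
      refine Finset.sum_congr rfl fun k hk => ?_
      rw [key k (le_of_lt (Finset.mem_range.mp hk))]
      ring_nf
    rw [hsum]
    have h2 := sum_id_real (m+1)
    have h6 := sum_sq_real (m+1)
    push_cast at h2 h6
    have hA : ∑ k ∈ Finset.range (m+1), (k:ℝ) = ((m:ℝ)+1) * m / 2 := by linarith
    have hQ : ∑ k ∈ Finset.range (m+1), (k:ℝ)^2
        = ((m:ℝ)+1) * m * (2*m+1) / 6 := by linarith
    have hexp : ∑ k ∈ Finset.range (m+1), ((k : ℝ) * (((m:ℝ)+1) - k)) / (m:ℝ) * σ2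
        = (((m:ℝ)+1) * (∑ k ∈ Finset.range (m+1), (k:ℝ))
            - ∑ k ∈ Finset.range (m+1), (k:ℝ)^2) / (m:ℝ) * σ2 := by
      rw [← Finset.sum_mul, ← Finset.sum_div]
      congr 2
      rw [Finset.mul_sum, ← Finset.sum_sub_distrib]
      exact Finset.sum_congr rfl fun k _ => by ring
    rw [hexp, hA, hQ]
    push_cast
    field_simp
    ring
  · have h1 : 0 ≤ ((m:ℝ) - 1) * σ2 := mul_nonneg (by linarith) hσ2nonneg
    have h2 : 0 ≤ ((m:ℝ) + 1) * (((m:ℝ) - 1) * σ2) := mul_nonneg (by positivity) h1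
    push_cast
    nlinarith [h2]
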